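/- Let V be a finite-dimensional real vector space, ν : V → ℝ a linear form, and ξ a quadratic form on V which has no linear factor, i.e. there exist no linear forms ℓ, ℓ′ : V → ℝ with ℓ ≠ 0 and ξ(x) = ℓ(x)·ℓ′(x) for all x. Let g : V → V be a linear automorphism such that ν(g(x))·ξ(g(x)) = ν(x)·ξ(x) for all x ∈ V, and suppose there exists x₀ ∈ V with g(x₀) = x₀ and ν(x₀) ≠ 0. Then ν(g(x)) = ν(x) and ξ(g(x)) = ξ(x) for all x ∈ V. -/

import Mathlib

open QuadraticMap

private lemma expand_quad {V : Type*} [AddCommGroup V] [Module ℝ V]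
    (ξ : QuadraticForm ℝ V) (u w : V) (t : ℝ) :
    ξ (u + t • w) = ξ u + t * polar ξ u w + t ^ 2 * ξ w := by
  have h : polar ξ u (t • w) = ξ (u + t • w) - ξ u - ξ (t • w) := rfl
  rw [polar_smul_right, smul_eq_mul, QuadraticMap.map_smul, smul_eq_mul] at h
  linear_combination -h

/-- A linear automorphism preserving the cubic form `ν·ξ`, where `ξ` has no linear
factor, and fixing a vector on which `ν` does not vanish, preserves both `ν` and `ξ`. -/
theorem automorphism_preserves_factors {V : Type*} [AddCommGroup V] [Module ℝ V]
    [FiniteDimensional ℝ V]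
    (ν : V →ₗ[ℝ] ℝ) (ξ : QuadraticForm ℝ V)
    (hirr : ¬ ∃ l l' : V →ₗ[ℝ] ℝ, l ≠ 0 ∧ ∀ x : V, ξ x = l x * l' x)
    (g : V ≃ₗ[ℝ] V)
    (hg : ∀ x : V, ν (g x) * ξ (g x) = ν x * ξ x)
    (x₀ : V) (hfix : g x₀ = x₀) (hx₀ : ν x₀ ≠ 0) :
    ∀ x : V, ν (g x) = ν x ∧ ξ (g x) = ξ x := by
  set a := ν x₀ with ha
  by_cases hker : ∀ y : V, ν y = 0 → ν (g y) = 0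
  · -- ν ∘ g = ν
    have hν : ∀ x : V, ν (g x) = ν x := by
      intro x
      have hz : ν (x - (ν x / a) • x₀) = 0 := by
        rw [_root_.map_sub, _root_.map_smul, smul_eq_mul]
        field_simp
        rw [← ha]; ring
      have h2 := hker _ hz
      rw [_root_.map_sub, _root_.map_smul, _root_.map_sub, _root_.map_smul, hfix, smul_eq_mul] at h2
      have : ν (g x) - ν x / a * a = 0 := h2
      field_simp at this
      linarith
    intro x
    refine ⟨hν x, ?_⟩
    set s : ℝ := -(ν x) / a with hs
    have key : ∀ t : ℝ, t ≠ s → ξ (g x + t • x₀) = ξ (x + t • x₀) := by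
      intro t ht
      have hne : ν (x + t • x₀) ≠ 0 := by
        rw [map_add, _root_.map_smul, smul_eq_mul]
        intro h
        apply ht
        rw [hs]
        field_simp
        linarith
      have h1 := hg (x + t • x₀)
      rw [hν (x + t • x₀)] at h1
      have h2 := mul_left_cancel₀ hne h1
      rw [map_add, _root_.map_smul, hfix] at h2
      exact h2
    have e1 := key (s + 1) (by linarith)
    have e2 := key (s + 2) (by linarith)
    rw [expand_quad, expand_quad] at e1 e2
    linear_combination (s + 2) * e1 - (s + 1) * e2
  · push_neg at hker
    obtain ⟨y, hy0, hgy⟩ := hker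
    exfalso
    apply hirr
    -- ξ ∘ g vanishes on ker ν
    have hvanish : ∀ x : V, ν x = 0 → ξ (g x) = 0 := by
      intro x hx
      set s : ℝ := -(ν (g x)) / (ν (g y)) with hs
      have key : ∀ t : ℝ, t ≠ s → ξ (g x + t • g y) = 0 := by
        intro t ht
        have h1 := hg (x + t • y)
        have hν0 : ν (x + t • y) = 0 := by
          rw [map_add, _root_.map_smul, smul_eq_mul, hx, hy0]; ring
        rw [hν0, zero_mul] at h1
        have hne : ν (g (x + t • y)) ≠ 0 := by
          rw [map_add, _root_.map_smul, map_add, _root_.map_smul, smul_eq_mul]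
          intro h
          apply ht
          rw [hs]
          field_simp
          linarith
        have := (mul_eq_zero.mp h1).resolve_left hne
        rw [map_add, _root_.map_smul] at this
        exact this
      have e1 := key (s + 1) (by linarith)
      have e2 := key (s + 2) (by linarith)
      have e3 := key (s + 3) (by linarith)
      rw [expand_quad] at e1 e2 e3
      linear_combination ((s + 2) * (s + 3) / 2) * e1 - (s + 1) * (s + 3) * e2
        + ((s + 1) * (s + 2) / 2) * e3
    set μ : V →ₗ[ℝ] ℝ := ν ∘ₗ (g.symm : V →ₗ[ℝ] V) with hμ
    have hsymm : g.symm x₀ = x₀ := (LinearEquiv.symm_apply_eq g).mpr hfix.symm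
    have hμx₀ : μ x₀ = a := by
      simp [hμ, hsymm, ha]
    set v : V := a⁻¹ • x₀ with hv
    have hμv : μ v = 1 := by
      rw [hv, _root_.map_smul, smul_eq_mul, hμx₀]
      field_simp
    -- ξ vanishes on ker μ
    have hξker : ∀ z : V, μ z = 0 → ξ z = 0 := by
      intro z hz
      have : ξ (g (g.symm z)) = 0 := hvanish _ hz
      rwa [g.apply_symm_apply] at this
    refine ⟨μ, ξ.polarBilin.flip v - ξ v • μ, ?_, ?_⟩
    · intro h0
      apply hx₀
      have := congrArg (fun f => f x₀) h0
      simp only [LinearMap.zero_apply] at this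
      rw [hμx₀] at this
      exact this
    · intro x
      have hdec : x = (x - μ x • v) + (μ x) • v := by abel
      have hker2 : μ (x - μ x • v) = 0 := by
        rw [_root_.map_sub, _root_.map_smul, smul_eq_mul, hμv]; ring
      have hξh : ξ (x - μ x • v) = 0 := hξker _ hker2
      have hexp : ξ x = ξ (x - μ x • v) + (μ x) * polar ξ (x - μ x • v) v
          + (μ x) ^ 2 * ξ v := by
        conv_lhs => rw [hdec]
        exact expand_quad ξ _ _ _
      rw [hξh, zero_add, polar_sub_left, polar_smul_left, polar_self] at hexp
      simp only [smul_eq_mul, nsmul_eq_mul] at hexp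
      push_cast at hexp
      simp only [LinearMap.sub_apply, LinearMap.smul_apply, LinearMap.flip_apply,
        polarBilin_apply_apply, smul_eq_mul]
      rw [hexp]; ring
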